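/- arXiv:1108.3632 — 5 statements merged into one kernel-verified Lean document; each statement's English description precedes it below -/
import Mathlib

section
/- Every tangent analytic binary word is tangent. -/
/-- Helper for deleting one letter `c` from each maximal run of `c`s.
The flag is `true` when we are at the start of the word or just after a letter `≠ c`,
i.e. when the next occurrence of `c` starts a maximal run and must be deleted. -/
def delRunAux (c : Bool) : Bool → List Bool → List Bool
  | _, [] => []
  | del, a :: l =>
      if a = c then
        (if del then delRunAux c false l else a :: delRunAux c false l)
      else a :: delRunAux c true l

/-- Delete one letter `c` from each maximal run of `c`s in `w`. -/
def delRun (c : Bool) (w : List Bool) : List Bool := delRunAux c true w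

/-- `Desub w v` : `v` is a desubstitution of the nonempty word `w`
(letter `0` is `false`, letter `1` is `true`):
if `11` does not occur in `w` one may delete one `0` from each maximal run of `0`s,
and if `00` does not occur in `w` one may delete one `1` from each maximal run of `1`s. -/
def Desub (w v : List Bool) : Prop :=
  w ≠ [] ∧
    ((¬ [true, true] <:+: w ∧ v = delRun false w) ∨
     (¬ [false, false] <:+: w ∧ v = delRun true w))

/-- States of the three-state "diagonal" automaton. -/
inductive DiagState | Q | R | S
  deriving DecidableEq

/-- Transitions of the diagonal automaton:
Q→R on 0, R→Q on 1, R→S on 0, S→R on 1. -/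
def diagStep : DiagState → Bool → Option DiagState
  | .Q, false => some .R
  | .R, true  => some .Q
  | .R, false => some .S
  | .S, true  => some .R
  | _, _ => none

/-- States of the eight-state "non-oscillating diagonal" automaton. -/
inductive NOState | B | R | S | T | U | C | D | E
  deriving DecidableEq

/-- Transitions of the non-oscillating diagonal automaton:
B→R on 0, R→B on 1, R→S on 0, S→T on 1, T→S on 0, T→U on 1, U→E on 0, E→U on 1,
B→C on 1, C→D on 0, D→C on 1, D→E on 0. -/
def noStep : NOState → Bool → Option NOState
  | .B, false => some .R
  | .B, true  => some .C
  | .R, false => some .S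
  | .R, true  => some .B
  | .S, true  => some .T
  | .T, false => some .S
  | .T, true  => some .U
  | .U, false => some .E
  | .C, false => some .D
  | .D, false => some .E
  | .D, true  => some .C
  | .E, true  => some .U
  | _, _ => none

/-- The list of states visited when reading a word from state `q`
in a (partial deterministic) automaton, if the whole word can be read. -/
def autTraj {σ : Type} (step : σ → Bool → Option σ) : σ → List Bool → Option (List σ)
  | q, [] => some [q]
  | q, a :: l => (step q a).bind fun q' => (autTraj step q' l).map (q :: ·)

/-- A word is diagonal if it labels a path of the diagonal automaton
(all states are initial and accepting). -/
def Diagonal (w : List Bool) : Prop := ∃ q : DiagState, (autTraj diagStep q w).isSome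

/-- A word is non-oscillating diagonal if it labels a path of the non-oscillating
diagonal automaton (all states are initial and accepting). -/
def NonOscDiagonal (w : List Bool) : Prop := ∃ q : NOState, (autTraj noStep q w).isSome

/-- A word is tangent if some finite sequence of desubstitutions leads to a diagonal word. -/
def Tangent (w : List Bool) : Prop :=
  ∃ v, Relation.ReflTransGen Desub w v ∧ Diagonal v

/-- A word is tangent analytic if some finite sequence of desubstitutions leads to a
non-oscillating diagonal word. -/
def TangentAnalytic (w : List Bool) : Prop :=
  ∃ v, Relation.ReflTransGen Desub w v ∧ NonOscDiagonal v

/-- A word is `k`-balanced if any two factors of the same length have numbers of `1`s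
differing by at most `k`. -/
def BalancedWord (k : ℕ) (w : List Bool) : Prop :=
  ∀ u v : List Bool, u <:+: w → v <:+: w → u.length = v.length →
    |(u.count true : ℤ) - (v.count true : ℤ)| ≤ (k : ℤ)

/-- `pcount L n` is the complexity `p_n(L)`: the number of words of length `n` in `L`. -/
noncomputable def pcount (L : Set (List Bool)) (n : ℕ) : ℕ :=
  Set.ncard {w | w ∈ L ∧ w.length = n}

/-- The language `T^∞` of tangent words. -/
def Tinf : Set (List Bool) := {w | Tangent w}

/-- The language `T^ω` of tangent analytic words. -/
def Tomega : Set (List Bool) := {w | TangentAnalytic w}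

/-- A word `w ∈ L` is bispecial when `0w`, `1w`, `w0`, `w1` all belong to `L`. -/
def Bispecial (L : Set (List Bool)) (w : List Bool) : Prop :=
  w ∈ L ∧ (false :: w) ∈ L ∧ (true :: w) ∈ L ∧ (w ++ [false]) ∈ L ∧ (w ++ [true]) ∈ L

/-- The number of two-sided extensions `a·w·b` of `w` inside `L`. -/
noncomputable def extCount (L : Set (List Bool)) (w : List Bool) : ℕ :=
  Set.ncard {p : Bool × Bool | (p.1 :: (w ++ [p.2])) ∈ L}

/-- A weak bispecial word of `L`. -/
def WeakBispecial (L : Set (List Bool)) (w : List Bool) : Prop :=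
  Bispecial L w ∧ extCount L w = 2

/-- A strong bispecial word of `L`. -/
def StrongBispecial (L : Set (List Bool)) (w : List Bool) : Prop :=
  Bispecial L w ∧ extCount L w = 4

/-- `wb L n` : the number of weak bispecial words of length `n` in `L`. -/
noncomputable def wb (L : Set (List Bool)) (n : ℕ) : ℕ :=
  Set.ncard {w | WeakBispecial L w ∧ w.length = n}

/-- `sb L n` : the number of strong bispecial words of length `n` in `L`. -/
noncomputable def sb (L : Set (List Bool)) (n : ℕ) : ℕ :=
  Set.ncard {w | StrongBispecial L w ∧ w.length = n}

/-- A language is factorial if it is closed under taking factors. -/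
def FactorialLang (L : Set (List Bool)) : Prop :=
  ∀ w ∈ L, ∀ u : List Bool, u <:+: w → u ∈ L

/-- A language is extendable if every word extends on both sides within the language. -/
def ExtendableLang (L : Set (List Bool)) : Prop :=
  ∀ w ∈ L, (∃ a : Bool, (a :: w) ∈ L) ∧ (∃ b : Bool, (w ++ [b]) ∈ L)


/-- Boolean readability: `rd step q w = true` iff the word `w` can be read from `q`. -/
def rd {σ : Type} (step : σ → Bool → Option σ) : σ → List Bool → Bool
  | _, [] => true
  | q, a :: l => match step q a with
    | some q' => rd step q' l
    | none => false

theorem autTraj_isSome_iff_rd {σ : Type} (step : σ → Bool → Option σ) (w : List Bool) :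
    ∀ q : σ, (autTraj step q w).isSome ↔ rd step q w = true := by
  induction w with
  | nil => intro q; simp [autTraj, rd]
  | cons a l ih =>
      intro q
      cases h : step q a with
      | none => simp [autTraj, rd, h]
      | some q' => simp [autTraj, rd, h, ih q']

def preN (a : Bool) (s : NOState → Bool) : NOState → Bool :=
  fun q => match noStep q a with
    | some q' => s q'
    | none => false

def preD (a : Bool) (t : DiagState → Bool) : DiagState → Bool :=
  fun p => match diagStep p a with
    | some p' => t p'
    | none => false

instance : Fintype NOState :=
  ⟨⟨{.B, .R, .S, .T, .U, .C, .D, .E}, by decide⟩, by intro x; cases x <;> decide⟩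

instance : Fintype DiagState :=
  ⟨⟨{.Q, .R, .S}, by decide⟩, by intro x; cases x <;> decide⟩

def NS (l : List NOState) : NOState → Bool := fun q => decide (q ∈ l)
def DS (l : List DiagState) : DiagState → Bool := fun p => decide (p ∈ l)

open NOState DiagState in
/-- The NO-component of the `i`-th reachable backward state-set pair. -/
def noSetOf : Fin 15 → NOState → Bool
  | 0 => NS [] | 1 => NS [] | 2 => NS [] | 3 => NS []
  | 4 => NS [B] | 5 => NS [B] | 6 => NS [B, C]
  | 7 => NS [B, C, D, E, R, S, T, U]
  | 8 => NS [B, C, D, R, T, U]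
  | 9 => NS [B, D, E, R, S, T]
  | 10 => NS [B, D, R] | 11 => NS [B, R, T]
  | 12 => NS [R] | 13 => NS [R] | 14 => NS [R, S]

open NOState DiagState in
/-- The diagonal-component of the `i`-th reachable backward state-set pair. -/
def dgSetOf : Fin 15 → DiagState → Bool
  | 0 => DS [] | 1 => DS [Q] | 2 => DS [R] | 3 => DS [S]
  | 4 => DS [Q] | 5 => DS [R] | 6 => DS [Q]
  | 7 => DS [Q, R, S] | 8 => DS [Q, R] | 9 => DS [R, S]
  | 10 => DS [R] | 11 => DS [R]
  | 12 => DS [R] | 13 => DS [S] | 14 => DS [S]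

/-- Backward transition table on the indices of reachable pairs. -/
def nextIdx : Fin 15 → Bool → Fin 15
  | 0, false => 0 | 0, true => 0
  | 1, false => 0 | 1, true => 2
  | 2, false => 1 | 2, true => 3
  | 3, false => 2 | 3, true => 0
  | 4, false => 0 | 4, true => 12
  | 5, false => 1 | 5, true => 13
  | 6, false => 0 | 6, true => 10
  | 7, false => 8 | 7, true => 9
  | 8, false => 6 | 8, true => 9
  | 9, false => 8 | 9, true => 14
  | 10, false => 6 | 10, true => 13
  | 11, false => 4 | 11, true => 14
  | 12, false => 4 | 12, true => 3
  | 13, false => 5 | 13, true => 0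
  | 14, false => 11 | 14, true => 0

theorem preN_noSetOf : ∀ (i : Fin 15) (a : Bool) (q : NOState),
    preN a (noSetOf i) q = noSetOf (nextIdx i a) q := by decide

theorem preD_dgSetOf : ∀ (i : Fin 15) (a : Bool) (p : DiagState),
    preD a (dgSetOf i) p = dgSetOf (nextIdx i a) p := by decide

theorem setOf_nonempty : ∀ i : Fin 15, ∀ q : NOState, noSetOf i q = true →
    ∃ p : DiagState, dgSetOf i p = true := by decide

theorem inv_main : ∀ w : List Bool, ∃ i : Fin 15,
    (∀ q, rd noStep q w = noSetOf i q) ∧ (∀ p, rd diagStep p w = dgSetOf i p) := by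
  intro w
  induction w with
  | nil => exact ⟨7, by decide, by decide⟩
  | cons a l ih =>
      obtain ⟨i, h1, h2⟩ := ih
      refine ⟨nextIdx i a, fun q => ?_, fun p => ?_⟩
      · have : rd noStep q (a :: l) = preN a (noSetOf i) q := by
          cases h : noStep q a <;> simp [rd, preN, h, h1]
        rw [this, preN_noSetOf]
      · have : rd diagStep p (a :: l) = preD a (dgSetOf i) p := by
          cases h : diagStep p a <;> simp [rd, preD, h, h2]
        rw [this, preD_dgSetOf]

theorem nonOsc_diagonal {w : List Bool} (h : NonOscDiagonal w) : Diagonal w := by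
  obtain ⟨q, hq⟩ := h
  rw [autTraj_isSome_iff_rd] at hq
  obtain ⟨i, h1, h2⟩ := inv_main w
  obtain ⟨p, hp⟩ := setOf_nonempty i q (by rw [← h1]; exact hq)
  exact ⟨p, (autTraj_isSome_iff_rd _ _ _).2 (by rw [h2]; exact hp)⟩

/-- every tangent analytic word is tangent. -/
theorem tangent_analytic_tangent (w : List Bool) (h : TangentAnalytic w) :
    Tangent w := by
  obtain ⟨v, hchain, hv⟩ := h
  exact ⟨v, hchain, nonOsc_diagonal hv⟩
end

section
/- Every tangent binary word is 2-balanced. -/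
section TangentAux

/-- final flag after reading a word -/
def flagAfter (c : Bool) : Bool → List Bool → Bool
  | b, [] => b
  | _, a :: l => if a = c then flagAfter c false l else flagAfter c true l

@[simp] lemma dRA_nil (c b : Bool) : delRunAux c b [] = [] := by cases b <;> rfl

@[simp] lemma dRA_true (b : Bool) (l : List Bool) :
    delRunAux false b (true :: l) = true :: delRunAux false true l := by
  cases b <;> simp [delRunAux]

@[simp] lemma dRA_ft (l : List Bool) :
    delRunAux false true (false :: l) = delRunAux false false l := by
  simp [delRunAux]

@[simp] lemma dRA_ff (l : List Bool) :
    delRunAux false false (false :: l) = false :: delRunAux false false l := by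
  simp [delRunAux]

lemma delRunAux_append (c : Bool) (x : List Bool) : ∀ (b : Bool) (y : List Bool),
    delRunAux c b (x ++ y) = delRunAux c b x ++ delRunAux c (flagAfter c b x) y := by
  induction x with
  | nil => intro b y; simp [flagAfter]
  | cons a l ih =>
    intro b y
    by_cases h : a = c <;> cases b <;> simp [delRunAux, flagAfter, h, ih]

lemma count_delRunAux (u : List Bool) : ∀ b, (delRunAux false b u).count true = u.count true := by
  induction u with
  | nil => simp
  | cons a l ih => intro b; cases a <;> cases b <;> simp [ih]

/-- upper bound on number of deletions -/
lemma len_delRunAux_ge (u : List Bool) : ∀ b,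
    u.length ≤ (delRunAux false b u).length + u.count true + (if b then 1 else 0) := by
  induction u with
  | nil => intro b; simp
  | cons a l ih =>
    intro b
    have hf := ih false
    have ht := ih true
    cases a <;> cases b <;> simp [List.count_cons] at hf ht ⊢ <;> omega

/-- lower bound on number of deletions, given no `11` factor -/
lemma len_delRunAux_le (u : List Bool) (h11 : ¬ [true, true] <:+: u) :
    ((delRunAux false true u).length + u.count true ≤ u.length + 1) ∧
    ((delRunAux false false u).length + u.count true ≤ u.length + 1) ∧
    (∀ l', u = false :: l' → (delRunAux false true u).length + u.count true ≤ u.length) := by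
  induction u with
  | nil => simp
  | cons a l ih =>
    have h11l : ¬ [true, true] <:+: l := fun hc => h11 (hc.trans (List.infix_cons (List.infix_refl l)))
    have IH := ih h11l
    have key : a = true → (delRunAux false true l).length + l.count true ≤ l.length := by
      intro ha
      match l, h11l with
      | [], _ => simp
      | false :: l', _ => exact IH.2.2 l' rfl
      | true :: l', h => exact absurd ⟨[], l', by simp [ha]⟩ (ha ▸ h11 : ¬ _)
    refine ⟨?_, ?_, ?_⟩
    · cases a
      · have := IH.2.1; simp [List.count_cons]; omega
      · have := key rfl; simp [List.count_cons]; omega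
    · cases a
      · have := IH.2.1; simp [List.count_cons]; omega
      · have := key rfl; simp [List.count_cons]; omega
    · intro l' hl'
      cases a
      · have := IH.2.1
        simp [List.count_cons]
        omega
      · simp at hl'


lemma infix_delRun {u w : List Bool} (h : u <:+: w) :
    ∃ b, delRunAux false b u <:+: delRun false w := by
  obtain ⟨s, t, rfl⟩ := h
  refine ⟨flagAfter false true s, ?_⟩
  unfold delRun
  rw [List.append_assoc, delRunAux_append, delRunAux_append]
  exact ⟨_, _, by rw [List.append_assoc]⟩

lemma core_one {w : List Bool} (h11 : ¬ [true, true] <:+: w)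
    (hb : BalancedWord 2 (delRun false w)) {u1 u2 : List Bool}
    (hu1 : u1 <:+: w) (hu2 : u2 <:+: w) (hlen : u1.length = u2.length) :
    (u1.count true : ℤ) ≤ (u2.count true : ℤ) + 2 := by
  obtain ⟨b1, hi1⟩ := infix_delRun hu1
  obtain ⟨b2, hi2⟩ := infix_delRun hu2
  have hc1 : (delRunAux false b1 u1).count true = u1.count true := count_delRunAux u1 b1
  have hc2 : (delRunAux false b2 u2).count true = u2.count true := count_delRunAux u2 b2
  have hup : u2.length ≤ (delRunAux false b2 u2).length + u2.count true + 1 := by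
    have := len_delRunAux_ge u2 b2; cases b2 <;> simp at this <;> omega
  have h11u : ¬ [true, true] <:+: u1 := fun hc => h11 (hc.trans hu1)
  have hlow : (delRunAux false b1 u1).length + u1.count true ≤ u1.length + 1 := by
    have := len_delRunAux_le u1 h11u; cases b1
    · exact this.2.1
    · exact this.1
  by_cases hL : (delRunAux false b1 u1).length ≤ (delRunAux false b2 u2).length
  · set p := (delRunAux false b2 u2).take (delRunAux false b1 u1).length with hp
    have hpin : p <:+: delRun false w := (List.take_prefix _ _).isInfix.trans hi2
    have hlenp : (delRunAux false b1 u1).length = p.length := by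
      simp [hp, hL]
    have hbal := hb _ p hi1 hpin hlenp
    have hcp : p.count true ≤ u2.count true := by
      rw [← hc2]; exact (List.take_sublist _ _).count_le true
    rw [abs_le] at hbal
    have h2 := hbal.2
    rw [hc1] at h2
    have : (p.count true : ℤ) ≤ (u2.count true : ℤ) := by exact_mod_cast hcp
    push_cast at h2 this ⊢
    linarith
  · have : u1.count true ≤ u2.count true + 2 := by omega
    exact_mod_cast this

lemma core {w : List Bool} (h11 : ¬ [true, true] <:+: w)
    (hb : BalancedWord 2 (delRun false w)) : BalancedWord 2 w := by
  intro u1 u2 hu1 hu2 hlen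
  rw [abs_le]
  have h1 := core_one h11 hb hu1 hu2 hlen
  have h2 := core_one h11 hb hu2 hu1 hlen.symm
  constructor <;> push_cast <;> linarith

@[simp] lemma map_not_not (v : List Bool) : (v.map not).map not = v := by
  simp [List.map_map, Function.comp_def]

lemma delRunAux_not (u : List Bool) : ∀ b,
    delRunAux false b (u.map not) = (delRunAux true b u).map not := by
  induction u with
  | nil => simp
  | cons a l ih => intro b; cases a <;> cases b <;> simp [delRunAux, ih]

lemma count_not_add (u : List Bool) : (u.map not).count true + u.count true = u.length := by
  induction u with
  | nil => simp
  | cons a l ih => cases a <;> simp [List.count_cons] <;> omega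

lemma bal_not {v : List Bool} (h : BalancedWord 2 v) : BalancedWord 2 (v.map not) := by
  intro u1 u2 h1 h2 hlen
  have h1' : u1.map not <:+: v := by
    have := h1.map not; rwa [map_not_not] at this
  have h2' : u2.map not <:+: v := by
    have := h2.map not; rwa [map_not_not] at this
  have hb := h _ _ h1' h2' (by simp [hlen])
  have e1 := count_not_add u1
  have e2 := count_not_add u2
  have e1' : ((u1.map not).count true : ℤ) + u1.count true = u1.length := by exact_mod_cast e1
  have e2' : ((u2.map not).count true : ℤ) + u2.count true = u2.length := by exact_mod_cast e2
  push_cast at hb ⊢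
  rw [abs_le] at hb ⊢
  have hl : (u1.length : ℤ) = u2.length := by exact_mod_cast hlen
  constructor <;> linarith [hb.1, hb.2]

lemma desub_bal {w v : List Bool} (hd : Desub w v) (hv : BalancedWord 2 v) :
    BalancedWord 2 w := by
  obtain ⟨-, ⟨h11, rfl⟩ | ⟨h00, rfl⟩⟩ := hd
  · exact core h11 hv
  · have h11 : ¬ [true, true] <:+: w.map not := by
      intro hc
      apply h00
      have := hc.map not
      rwa [map_not_not] at this
    have hv' : BalancedWord 2 (delRun false (w.map not)) := by
      rw [show delRun false (w.map not) = (delRun true w).map not from delRunAux_not w true]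
      exact bal_not hv
    have := bal_not (core h11 hv')
    rwa [map_not_not] at this

-- Diagonal words are 2-balanced
def ht : DiagState → ℤ
  | .Q => 2
  | .R => 1
  | .S => 0

lemma step_ht {q q' : DiagState} {a : Bool} (h : diagStep q a = some q') :
    ht q' - ht q = 2 * (if a then 1 else 0) - 1 := by
  cases q <;> cases a <;> simp [diagStep] at h <;> subst h <;> simp [ht]

lemma traj_count (u : List Bool) : ∀ q : DiagState, (autTraj diagStep q u).isSome →
    ∃ q', 2 * (u.count true : ℤ) - u.length = ht q' - ht q := by
  induction u with
  | nil => intro q _; exact ⟨q, by simp⟩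
  | cons a l ih =>
    intro q h
    cases hstep : diagStep q a with
    | none => rw [autTraj, hstep] at h; simp at h
    | some q1 =>
      rw [autTraj, hstep] at h
      have h' : (autTraj diagStep q1 l).isSome := by
        simpa using h
      obtain ⟨q', hq'⟩ := ih q1 h'
      refine ⟨q', ?_⟩
      have hs := step_ht hstep
      cases a <;> simp [List.count_cons] at hs ⊢ <;> linarith

lemma ht_mem (q : DiagState) : 0 ≤ ht q ∧ ht q ≤ 2 := by cases q <;> simp [ht]

lemma traj_prefix {σ : Type} (step : σ → Bool → Option σ) (y : List Bool) :
    ∀ (x : List Bool) (q : σ), (autTraj step q (x ++ y)).isSome →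
      (autTraj step q x).isSome ∧ ∃ q', (autTraj step q' y).isSome := by
  intro x
  induction x with
  | nil => intro q h; exact ⟨by simp [autTraj], q, h⟩
  | cons a l ih =>
    intro q h
    cases hstep : step q a with
    | none => rw [List.cons_append, autTraj, hstep] at h; simp at h
    | some q1 =>
      rw [List.cons_append, autTraj, hstep] at h
      have h' : (autTraj step q1 (l ++ y)).isSome := by simpa using h
      obtain ⟨h1, q', h2⟩ := ih q1 h'
      refine ⟨?_, q', h2⟩
      rw [autTraj, hstep]
      simpa using h1

lemma infix_traj {σ : Type} {step : σ → Bool → Option σ} {u w : List Bool} {q : σ}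
    (h : (autTraj step q w).isSome) (hu : u <:+: w) :
    ∃ q0, (autTraj step q0 u).isSome := by
  obtain ⟨s, t, rfl⟩ := hu
  rw [List.append_assoc] at h
  obtain ⟨-, q1, h1⟩ := traj_prefix step (u ++ t) s q h
  obtain ⟨h2, -⟩ := traj_prefix step t u q1 h1
  exact ⟨q1, h2⟩

lemma diag_bal {w : List Bool} (h : Diagonal w) : BalancedWord 2 w := by
  obtain ⟨q, hq⟩ := h
  intro u1 u2 h1 h2 hlen
  obtain ⟨q1, hq1⟩ := infix_traj hq h1
  obtain ⟨q2, hq2⟩ := infix_traj hq h2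
  obtain ⟨q1', e1⟩ := traj_count u1 q1 hq1
  obtain ⟨q2', e2⟩ := traj_count u2 q2 hq2
  have b1 := ht_mem q1; have b1' := ht_mem q1'
  have b2 := ht_mem q2; have b2' := ht_mem q2'
  have hl : (u1.length : ℤ) = u2.length := by exact_mod_cast hlen
  rw [abs_le]
  push_cast
  constructor <;> linarith [b1.1, b1.2, b1'.1, b1'.2, b2.1, b2.2, b2'.1, b2'.2]

end TangentAux

/-- every tangent word is 2-balanced. -/
theorem tangent_two_balanced (w : List Bool) (h : Tangent w) :
    BalancedWord 2 w := by
  obtain ⟨v, hchain, hdiag⟩ := h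
  have hv : BalancedWord 2 v := diag_bal hdiag
  induction hchain using Relation.ReflTransGen.head_induction_on with
  | refl => exact hv
  | head hstep _ ih => exact desub_bal hstep ih
end

section
/- The inclusions between the four classes are strict: there exists a tangent analytic word that is not 1-balanced, there exists a tangent word that is not tangent analytic, and there exists a 2-balanced word that is not tangent. -/
lemma stuck {w : List Bool} (h1 : [true, true] <:+: w) (h2 : [false, false] <:+: w) :
    ∀ v, Relation.ReflTransGen Desub w v → v = w := by
  intro v h
  rcases h.cases_head with h' | ⟨c, hd, _⟩
  · exact h'.symm
  · rcases hd.2 with ⟨hc, _⟩ | ⟨hc, _⟩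
    · exact absurd h1 hc
    · exact absurd h2 hc

lemma balanced_of_check (k : ℕ) (w : List Bool)
    (h : ∀ t1 ∈ w.tails, ∀ u ∈ t1.inits, ∀ t2 ∈ w.tails, ∀ v ∈ t2.inits,
      u.length = v.length → u.count true ≤ v.count true + k ∧ v.count true ≤ u.count true + k) :
    BalancedWord k w := by
  intro u v hu hv hlen
  rw [List.infix_iff_prefix_suffix] at hu hv
  obtain ⟨t1, hu1, hu2⟩ := hu
  obtain ⟨t2, hv1, hv2⟩ := hv
  have := h t1 ((List.mem_tails _ _).2 hu2) u ((List.mem_inits _ _).2 hu1)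
      t2 ((List.mem_tails _ _).2 hv2) v ((List.mem_inits _ _).2 hv1) hlen
  rw [abs_sub_le_iff]
  constructor <;> [skip; skip] <;> push_cast <;> omega

/-- the inclusions are strict: some tangent analytic word is not 1-balanced,
some tangent word is not tangent analytic, and some 2-balanced word is not tangent. -/
theorem strict_inclusions :
    (∃ w : List Bool, TangentAnalytic w ∧ ¬ BalancedWord 1 w) ∧
    (∃ w : List Bool, Tangent w ∧ ¬ TangentAnalytic w) ∧
    (∃ w : List Bool, BalancedWord 2 w ∧ ¬ Tangent w) := by
  refine ⟨⟨[false, false, true, true], ?_, ?_⟩,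
    ⟨[false, false, true, true, false, false], ?_, ?_⟩,
    ⟨[false, false, true, true, false, false, false], ?_, ?_⟩⟩
  · exact ⟨_, Relation.ReflTransGen.refl, ⟨.B, by decide⟩⟩
  · intro hb
    have := hb [false, false] [true, true] (by decide) (by decide) rfl
    norm_num at this
  · exact ⟨_, Relation.ReflTransGen.refl, ⟨.Q, by decide⟩⟩
  · rintro ⟨v, hchain, q, hq⟩
    have hv := stuck (by decide) (by decide) v hchain
    subst hv
    revert hq; cases q <;> decide
  · exact balanced_of_check 2 _ (by decide)
  · rintro ⟨v, hchain, q, hq⟩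
    have hv := stuck (by decide) (by decide) v hchain
    subst hv
    revert hq; cases q <;> decide
end

section
/- Every tangent analytic word w can be written as a concatenation w = u·v of two 1-balanced words u and v. -/
namespace myTA

/- ---------- basics ---------- -/

theorem count_tf : ∀ l : List Bool, l.count true + l.count false = l.length := by
  intro l; induction l with
  | nil => rfl
  | cons a l ih => cases a <;> simp [List.count_cons] <;> omega

theorem bal_infix {w u : List Bool} (h : BalancedWord 1 w) (hu : u <:+: w) :
    BalancedWord 1 u :=
  fun a b ha hb hl => h a b (ha.trans hu) (hb.trans hu) hl

theorem bal_of_count_true {w : List Bool} (h : w.count true ≤ 1) :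
    BalancedWord 1 w := by
  intro u v hu hv _
  have h1 := le_trans (hu.sublist.count_le true) h
  have h2 := le_trans (hv.sublist.count_le true) h
  rw [abs_sub_le_iff]; omega

theorem bal_of_count_false {w : List Bool} (h : w.count false ≤ 1) :
    BalancedWord 1 w := by
  intro u v hu hv hl
  have h1 := le_trans (hu.sublist.count_le false) h
  have h2 := le_trans (hv.sublist.count_le false) h
  have e1 := count_tf u
  have e2 := count_tf v
  rw [abs_sub_le_iff]; omega

def negW (w : List Bool) : List Bool := w.map (fun b => !b)

theorem negW_negW (w : List Bool) : negW (negW w) = w := by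
  simp [negW, List.map_map, Function.comp_def]

theorem count_negW_true : ∀ u : List Bool, (negW u).count true = u.count false := by
  intro u; induction u with
  | nil => rfl
  | cons a l ih => cases a <;> simp [negW, List.count_cons] at * <;> omega

theorem length_negW (u : List Bool) : (negW u).length = u.length := by
  simp [negW]

theorem bal_negW {w : List Bool} (h : BalancedWord 1 w) :
    BalancedWord 1 (negW w) := by
  intro u v hu hv hl
  have hu' : negW u <:+: w := by
    have := List.IsInfix.map (fun b => !b) hu
    rwa [show List.map (fun b => !b) (negW w) = w from negW_negW w] at this
  have hv' : negW v <:+: w := by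
    have := List.IsInfix.map (fun b => !b) hv
    rwa [show List.map (fun b => !b) (negW w) = w from negW_negW w] at this
  have hb := h _ _ hu' hv' (by rw [length_negW, length_negW, hl])
  have c1 : (negW u).count true = u.count false := count_negW_true u
  have c2 : (negW v).count true = v.count false := count_negW_true v
  have e1 := count_tf u
  have e2 := count_tf v
  rw [abs_sub_le_iff] at *
  omega


def psiW : List Bool → List Bool
  | [] => []
  | true :: l => true :: false :: psiW l
  | false :: l => false :: psiW l

theorem psi_prefix_decomp : ∀ (x u : List Bool), u <+: psiW x →
    ∃ y b, b ≤ 1 ∧ (y ++ List.replicate b true) <+: x ∧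
      u.length = b + y.length + y.count true ∧ u.count true = b + y.count true := by
  intro x
  induction x with
  | nil =>
    intro u hu
    rw [show psiW [] = [] from rfl] at hu
    rw [List.prefix_nil] at hu; subst hu
    exact ⟨[], 0, by omega, by simp, by simp, by simp⟩
  | cons a x ih =>
    intro u hu
    cases a with
    | false =>
      rw [show psiW (false :: x) = false :: psiW x from rfl] at hu
      cases u with
      | nil => exact ⟨[], 0, by omega, by simp, by simp, by simp⟩
      | cons c u' =>
        rw [List.cons_prefix_cons] at hu
        obtain ⟨rfl, hu'⟩ := hu
        obtain ⟨y, b, hb, hpre, hlen, hcnt⟩ := ih u' hu'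
        refine ⟨false :: y, b, hb, ?_, ?_, ?_⟩
        · rw [List.cons_append, List.cons_prefix_cons]; exact ⟨rfl, hpre⟩
        · simp [List.count_cons] at *; omega
        · simp [List.count_cons] at *; omega
    | true =>
      rw [show psiW (true :: x) = true :: false :: psiW x from rfl] at hu
      cases u with
      | nil => exact ⟨[], 0, by omega, by simp, by simp, by simp⟩
      | cons c u' =>
        rw [List.cons_prefix_cons] at hu
        obtain ⟨rfl, hu'⟩ := hu
        cases u' with
        | nil =>
          refine ⟨[], 1, le_refl 1, ?_, by simp, by simp⟩
          simp [List.cons_prefix_cons]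
        | cons c2 u'' =>
          rw [List.cons_prefix_cons] at hu'
          obtain ⟨rfl, hu''⟩ := hu'
          obtain ⟨y, b, hb, hpre, hlen, hcnt⟩ := ih u'' hu''
          refine ⟨true :: y, b, hb, ?_, ?_, ?_⟩
          · rw [List.cons_append, List.cons_prefix_cons]; exact ⟨rfl, hpre⟩
          · simp [List.count_cons] at *; omega
          · simp [List.count_cons] at *; omega

theorem psi_suffix : ∀ (x s : List Bool), s <:+ psiW x →
    (∃ x2, x2 <:+ x ∧ s = psiW x2) ∨ (∃ x2, (true :: x2) <:+ x ∧ s = false :: psiW x2) := by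
  intro x
  induction x with
  | nil =>
    intro s hs
    rw [show psiW [] = [] from rfl, List.suffix_nil] at hs; subst hs
    exact Or.inl ⟨[], List.nil_suffix, rfl⟩
  | cons a x ih =>
    intro s hs
    cases a with
    | false =>
      rw [show psiW (false :: x) = false :: psiW x from rfl, List.suffix_cons_iff] at hs
      rcases hs with rfl | hs
      · exact Or.inl ⟨false :: x, List.suffix_refl _, rfl⟩
      · rcases ih s hs with ⟨x2, h1, h2⟩ | ⟨x2, h1, h2⟩
        · exact Or.inl ⟨x2, h1.trans (List.suffix_cons _ _), h2⟩
        · exact Or.inr ⟨x2, h1.trans (List.suffix_cons _ _), h2⟩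
    | true =>
      rw [show psiW (true :: x) = true :: false :: psiW x from rfl, List.suffix_cons_iff] at hs
      rcases hs with rfl | hs
      · exact Or.inl ⟨true :: x, List.suffix_refl _, rfl⟩
      · rw [List.suffix_cons_iff] at hs
        rcases hs with rfl | hs
        · exact Or.inr ⟨x, List.suffix_refl _, rfl⟩
        · rcases ih s hs with ⟨x2, h1, h2⟩ | ⟨x2, h1, h2⟩
          · exact Or.inl ⟨x2, h1.trans (List.suffix_cons _ _), h2⟩
          · exact Or.inr ⟨x2, h1.trans (List.suffix_cons _ _), h2⟩

theorem psi_infix_decomp {x u : List Bool} (h : u <:+: psiW x) :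
    ∃ y a b, a ≤ 1 ∧ b ≤ 1 ∧
      (List.replicate a true ++ (y ++ List.replicate b true)) <:+: x ∧
      u.length = a + b + y.length + y.count true ∧ u.count true = b + y.count true := by
  rw [List.infix_iff_prefix_suffix] at h
  obtain ⟨t, hpre, hsuf⟩ := h
  rcases psi_suffix x t hsuf with ⟨x2, hx2, rfl⟩ | ⟨x2, hx2, rfl⟩
  · obtain ⟨y, b, hb, hyp, hlen, hcnt⟩ := psi_prefix_decomp x2 u hpre
    exact ⟨y, 0, b, by omega, hb, by
      simpa using (hyp.isInfix.trans hx2.isInfix), by simpa using hlen, hcnt⟩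
  · cases u with
    | nil =>
      exact ⟨[], 0, 0, by omega, by omega, by simp, by simp, by simp⟩
    | cons c u' =>
      rw [List.cons_prefix_cons] at hpre
      obtain ⟨rfl, hu'⟩ := hpre
      obtain ⟨y, b, hb, hyp, hlen, hcnt⟩ := psi_prefix_decomp x2 u' hu'
      refine ⟨y, 1, b, le_refl 1, hb, ?_, ?_, ?_⟩
      · have h1 : (true :: (y ++ List.replicate b true)) <+: (true :: x2) := by
          rw [List.cons_prefix_cons]; exact ⟨rfl, hyp⟩
        have := h1.isInfix.trans hx2.isInfix
        simpa using this
      · simp [List.count_cons] at *; omega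
      · simp [List.count_cons] at *; omega

theorem helperA {x u : List Bool} (h : u <:+: psiW x) :
    ∃ Y, Y <:+: x ∧ Y.length + u.count true ≤ u.length + 1 ∧ u.count true ≤ Y.count true := by
  obtain ⟨y, a, b, ha, hb, hinf, hlen, hcnt⟩ := psi_infix_decomp h
  refine ⟨List.replicate a true ++ (y ++ List.replicate b true), hinf, ?_, ?_⟩ <;>
    simp [List.count_append, List.count_replicate] <;> omega

theorem helperB {x u : List Bool} (h : u <:+: psiW x) :
    ∃ y, y <:+: x ∧ u.length ≤ y.length + u.count true + 1 ∧ y.count true ≤ u.count true := by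
  obtain ⟨y, a, b, ha, hb, hinf, hlen, hcnt⟩ := psi_infix_decomp h
  refine ⟨y, (?_ : y <:+: _).trans hinf, by omega, by omega⟩
  exact ⟨List.replicate a true, List.replicate b true, List.append_assoc _ _ _⟩

theorem helperB' {x u : List Bool} (h : u <+: psiW x) :
    ∃ y, y <:+: x ∧ u.length ≤ y.length + u.count true ∧ y.count true ≤ u.count true := by
  obtain ⟨y, b, hb, hyp, hlen, hcnt⟩ := psi_prefix_decomp x u h
  refine ⟨y, ((List.prefix_append y (List.replicate b true)).isInfix.trans hyp.isInfix), by omega, by omega⟩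

theorem fromPrefix1 {v u : List Bool} (h : u <+: (false :: psiW v)) :
    ∃ Y, Y <:+: v ∧ Y.length + u.count true ≤ u.length ∧ u.count true ≤ Y.count true := by
  cases u with
  | nil => exact ⟨[], by simp, by simp, by simp⟩
  | cons c u' =>
    rw [List.cons_prefix_cons] at h
    obtain ⟨rfl, h'⟩ := h
    obtain ⟨Y, hY, e1, e2⟩ := helperA h'.isInfix
    have hc1 : (false :: u').count true = u'.count true := by simp
    have hl1 : (false :: u').length = u'.length + 1 := rfl
    exact ⟨Y, hY, by omega, by omega⟩

theorem fromPrefix2 {v u : List Bool} (h : u <+: (false :: psiW v)) :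
    ∃ y, y <:+: v ∧ u.length ≤ y.length + u.count true + 1 ∧ y.count true ≤ u.count true := by
  cases u with
  | nil => exact ⟨[], by simp, by simp, by simp⟩
  | cons c u' =>
    rw [List.cons_prefix_cons] at h
    obtain ⟨rfl, h'⟩ := h
    obtain ⟨y, hy, e1, e2⟩ := helperB' h'
    have hc1 : (false :: u').count true = u'.count true := by simp
    have hl1 : (false :: u').length = u'.length + 1 := rfl
    exact ⟨y, hy, by omega, by omega⟩

theorem clash {v Y y : List Bool} (hv : BalancedWord 1 v) (hY : Y <:+: v) (hy : y <:+: v)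
    (h1 : Y.length ≤ y.length) (h2 : y.count true + 2 ≤ Y.count true) : False := by
  have hz : (y.take Y.length) <:+: v := (y.take_prefix Y.length).isInfix.trans hy
  have hzl : (y.take Y.length).length = Y.length := by rw [List.length_take]; omega
  have hzc : (y.take Y.length).count true ≤ y.count true :=
    (List.take_sublist _ _).count_le true
  have hbal := hv Y (y.take Y.length) hY hz hzl.symm
  rw [abs_sub_le_iff] at hbal
  omega

theorem bal_psi {v : List Bool} (hv : BalancedWord 1 v) :
    BalancedWord 1 (false :: psiW v) := by
  have key : ∀ u1 u2 : List Bool, u1 <:+: (false :: psiW v) → u2 <:+: (false :: psiW v) →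
      u1.length = u2.length → u1.count true ≤ u2.count true + 1 := by
    intro u1 u2 h1 h2 hlen
    by_contra hcon
    push_neg at hcon
    have hc : u2.count true + 2 ≤ u1.count true := hcon
    rw [List.infix_cons_iff] at h1 h2
    rcases h1 with h1 | h1 <;> rcases h2 with h2 | h2
    · have heq : u1 = u2 :=
        (List.prefix_of_prefix_length_le h1 h2 (le_of_eq hlen)).eq_of_length hlen
      rw [heq] at hc; omega
    · obtain ⟨Y, hY, e1, e2⟩ := fromPrefix1 h1
      obtain ⟨y, hy, f1, f2⟩ := helperB h2
      exact clash hv hY hy (by omega) (by omega)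
    · obtain ⟨Y, hY, e1, e2⟩ := helperA h1
      obtain ⟨y, hy, f1, f2⟩ := fromPrefix2 h2
      exact clash hv hY hy (by omega) (by omega)
    · obtain ⟨Y, hY, e1, e2⟩ := helperA h1
      obtain ⟨y, hy, f1, f2⟩ := helperB h2
      exact clash hv hY hy (by omega) (by omega)
  intro u1 u2 h1 h2 hlen
  have a1 := key u1 u2 h1 h2 hlen
  have a2 := key u2 u1 h2 h1 hlen.symm
  rw [abs_sub_le_iff]
  omega



theorem aux_nil (c d : Bool) : delRunAux c d [] = [] := rfl
theorem aux_del (c : Bool) (l : List Bool) :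
    delRunAux c true (c :: l) = delRunAux c false l := by simp [delRunAux]
theorem aux_keep (c : Bool) (l : List Bool) :
    delRunAux c false (c :: l) = c :: delRunAux c false l := by simp [delRunAux]
theorem aux_ne {a c : Bool} (h : a ≠ c) (d : Bool) (l : List Bool) :
    delRunAux c d (a :: l) = a :: delRunAux c true l := by simp [delRunAux, h]

theorem infix_cons_of {u l : List Bool} {a : Bool} (h : u <:+: l) : u <:+: a :: l := by
  obtain ⟨s, t, rfl⟩ := h
  exact ⟨a :: s, t, rfl⟩

theorem nf_tail {x a : Bool} {l : List Bool} (h : ¬ [x, x] <:+: a :: l) : ¬ [x, x] <:+: l :=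
  fun hc => h (infix_cons_of hc)

theorem nf_head {x : Bool} {l : List Bool} (h : ¬ [x, x] <:+: x :: x :: l) : False :=
  h ⟨[], l, rfl⟩

-- w is a prefix of psiW (delRunAux false false w)
theorem pre0 : ∀ (n : ℕ) (w : List Bool), w.length ≤ n → ¬ [true, true] <:+: w →
    w <+: psiW (delRunAux false false w) := by
  intro n
  induction n with
  | zero =>
    intro w hw _
    have : w = [] := List.length_eq_zero_iff.mp (by omega)
    subst this; simp
  | succ n ih =>
    intro w hw hnf
    match w with
    | [] => simp
    | false :: w' =>
      rw [aux_keep]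
      rw [show psiW (false :: delRunAux false false w') = false :: psiW (delRunAux false false w') from rfl]
      rw [List.cons_prefix_cons]
      exact ⟨rfl, ih w' (by simp at hw; omega) (nf_tail hnf)⟩
    | true :: w' =>
      rw [aux_ne (by simp) false w']
      match w' with
      | [] => simp [delRunAux, psiW]
      | true :: w'' => exact absurd trivial (fun _ => nf_head hnf)
      | false :: w'' =>
        rw [aux_del]
        rw [show psiW (true :: delRunAux false false w'') =
          true :: false :: psiW (delRunAux false false w'') from rfl]
        rw [List.cons_prefix_cons]
        refine ⟨rfl, ?_⟩
        rw [List.cons_prefix_cons]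
        exact ⟨rfl, ih w'' (by simp at hw ⊢; omega) (nf_tail (nf_tail hnf))⟩

theorem pre1 (w : List Bool) (hnf : ¬ [true, true] <:+: w) :
    w <+: psiW (delRunAux false true w) ∨ w <+: false :: psiW (delRunAux false true w) := by
  match w with
  | [] => left; simp
  | false :: w' =>
    right
    rw [aux_del, List.cons_prefix_cons]
    exact ⟨rfl, pre0 w'.length w' le_rfl (nf_tail hnf)⟩
  | true :: w' =>
    left
    rw [aux_ne (by simp) true w']
    match w' with
    | [] => simp [delRunAux, psiW]
    | true :: w'' => exact absurd trivial (fun _ => nf_head hnf)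
    | false :: w'' =>
      rw [aux_del]
      rw [show psiW (true :: delRunAux false false w'') =
        true :: false :: psiW (delRunAux false false w'') from rfl]
      rw [List.cons_prefix_cons]
      refine ⟨rfl, ?_⟩
      rw [List.cons_prefix_cons]
      exact ⟨rfl, pre0 w''.length w'' le_rfl (nf_tail (nf_tail hnf))⟩

theorem prefix_infix_cons {u l : List Bool} {a : Bool} (h : u <+: l) : u <:+: a :: l := by
  obtain ⟨t, rfl⟩ := h
  exact ⟨[a], t, rfl⟩

theorem preAll (d : Bool) (w : List Bool) (hnf : ¬ [true, true] <:+: w) :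
    w <:+: false :: psiW (delRunAux false d w) := by
  cases d with
  | false => exact prefix_infix_cons (pre0 w.length w le_rfl hnf)
  | true =>
    rcases pre1 w hnf with h | h
    · exact prefix_infix_cons h
    · exact h.isInfix





theorem aux_split (c : Bool) : ∀ (w : List Bool) (d : Bool) (z1 z2 : List Bool),
    delRunAux c d w = z1 ++ z2 →
    ∃ w1 w2 d2, w = w1 ++ w2 ∧ delRunAux c d w1 = z1 ∧ delRunAux c d2 w2 = z2 := by
  intro w
  induction w with
  | nil =>
    intro d z1 z2 h
    simp only [show delRunAux c d [] = [] from rfl] at h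
    rw [eq_comm, List.append_eq_nil_iff] at h
    obtain ⟨rfl, rfl⟩ := h
    exact ⟨[], [], d, rfl, rfl, rfl⟩
  | cons a w ih =>
    intro d z1 z2 h
    by_cases hac : a = c
    · subst hac
      cases d with
      | true =>
        rw [aux_del] at h
        obtain ⟨w1, w2, d2, rfl, h1, h2⟩ := ih false z1 z2 h
        exact ⟨a :: w1, w2, d2, rfl, by rw [aux_del]; exact h1, h2⟩
      | false =>
        rw [aux_keep] at h
        cases z1 with
        | nil =>
          rw [List.nil_append] at h
          exact ⟨[], a :: w, false, rfl, rfl, by rw [aux_keep]; exact h⟩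
        | cons b z1' =>
          rw [List.cons_append] at h
          injection h with hb h
          obtain ⟨w1, w2, d2, rfl, h1, h2⟩ := ih false z1' z2 h
          exact ⟨a :: w1, w2, d2, rfl, by rw [aux_keep, h1, hb], h2⟩
    · rw [aux_ne hac] at h
      cases z1 with
      | nil =>
        rw [List.nil_append] at h
        exact ⟨[], a :: w, d, rfl, rfl, by rw [aux_ne hac]; exact h⟩
      | cons b z1' =>
        rw [List.cons_append] at h
        injection h with hb h
        obtain ⟨w1, w2, d2, rfl, h1, h2⟩ := ih true z1' z2 h
        exact ⟨a :: w1, w2, d2, rfl, by rw [aux_ne hac, h1, hb], h2⟩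


theorem aux_neg (c : Bool) : ∀ (l : List Bool) (d : Bool),
    delRunAux (!c) d (negW l) = negW (delRunAux c d l) := by
  intro l
  induction l with
  | nil => intro d; rfl
  | cons a l ih =>
    intro d
    by_cases hac : a = c
    · subst hac
      cases d with
      | true =>
        rw [show negW (a :: l) = (!a) :: negW l from rfl, aux_del, aux_del, ih]
      | false =>
        rw [show negW (a :: l) = (!a) :: negW l from rfl, aux_keep, aux_keep,
          show negW (a :: delRunAux a false l) = (!a) :: negW (delRunAux a false l) from rfl, ih]
    · have hac' : (!a) ≠ (!c) := by cases a <;> cases c <;> simp_all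
      rw [show negW (a :: l) = (!a) :: negW l from rfl, aux_ne hac', aux_ne hac,
        show negW (a :: delRunAux c true l) = (!a) :: negW (delRunAux c true l) from rfl, ih]

-- count lemmas
theorem cnt_aux_one : ∀ (n : ℕ) (c : Bool) (l : List Bool), l.length ≤ n →
    ¬ [c, c] <:+: l → (delRunAux c true l).count c = 0 := by
  intro n
  induction n with
  | zero =>
    intro c l hl _
    have : l = [] := List.length_eq_zero_iff.mp (by omega)
    subst this; simp [delRunAux]
  | succ n ih =>
    intro c l hl hnf
    match l with
    | [] => simp [delRunAux]
    | a :: l' =>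
      by_cases hac : a = c
      · subst hac
        rw [aux_del]
        match l' with
        | [] => simp [delRunAux]
        | b :: l'' =>
          by_cases hbc : b = a
          · subst hbc; exact absurd ⟨[], l'', rfl⟩ hnf
          · rw [aux_ne hbc]
            rw [List.count_cons]
            have := ih a l'' (by simp at hl; omega) (nf_tail (nf_tail hnf))
            simp [hbc, this]
      · rw [aux_ne hac, List.count_cons]
        have := ih c l' (by simp at hl; omega) (nf_tail hnf)
        simp [hac, this]

theorem cnt_aux_mono (c : Bool) (l : List Bool) :
    (delRunAux c true l).count c ≤ (delRunAux c false l).count c := by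
  match l with
  | [] => exact le_rfl
  | a :: l' =>
    by_cases hac : a = c
    · subst hac
      rw [aux_del, aux_keep, List.count_cons]
      simp
    · rw [aux_ne hac, aux_ne hac]


theorem nf_nil {x : Bool} : ¬ [x, x] <:+: ([] : List Bool) := by
  intro h
  have := h.length_le
  simp at this

theorem nf_negW {w : List Bool} (h : ¬ [false, false] <:+: w) :
    ¬ [true, true] <:+: negW w := by
  intro hc
  apply h
  have h2 := List.IsInfix.map (fun b => !b) hc
  simpa [negW, List.map_map, Function.comp_def] using h2

theorem bal_pre0 {w : List Bool} {d : Bool} (h11 : ¬ [true, true] <:+: w)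
    (hb : BalancedWord 1 (delRunAux false d w)) : BalancedWord 1 w :=
  bal_infix (bal_psi hb) (preAll d w h11)

theorem bal_pre1 {w : List Bool} {d : Bool} (h00 : ¬ [false, false] <:+: w)
    (hb : BalancedWord 1 (delRunAux true d w)) : BalancedWord 1 w := by
  have h1 : ¬ [true, true] <:+: negW w := nf_negW h00
  have e := aux_neg true w d
  simp only [Bool.not_true] at e
  have h2 : BalancedWord 1 (delRunAux false d (negW w)) := by
    rw [e]; exact bal_negW hb
  have h3 := bal_negW (bal_pre0 h1 h2)
  rwa [negW_negW] at h3

def Gt (v : List Bool) : Prop :=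
  (¬ [false, false] <:+: v ∧ (delRunAux true true v).count true ≤ 1) ∨
  (¬ [true, true] <:+: v ∧ (delRunAux false true v).count false ≤ 1)

def AL (w : List Bool) : Prop := ¬ [false, false] <:+: w ∧ ¬ [true, true] <:+: w

theorem gt_bal {v : List Bool} (h : Gt v) : BalancedWord 1 v := by
  rcases h with ⟨h00, hcnt⟩ | ⟨h11, hcnt⟩
  · exact bal_pre1 h00 (bal_of_count_true hcnt)
  · exact bal_pre0 h11 (bal_of_count_false hcnt)

theorem al_gt {w : List Bool} (h : AL w) : Gt w :=
  Or.inl ⟨h.1, by rw [cnt_aux_one w.length true w le_rfl h.2]; omega⟩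

theorem al_bal {w : List Bool} (h : AL w) : BalancedWord 1 w := gt_bal (al_gt h)

theorem bal_nil : BalancedWord 1 ([] : List Bool) := bal_of_count_true (by simp)

theorem head_of_single_prefix {x : Bool} {l : List Bool} (h : [x] <+: l) :
    l.head? = some x := by
  cases l with
  | nil => simp at h
  | cons b l' => rw [List.cons_prefix_cons] at h; rw [h.1]; rfl

theorem two_infix_cons {x a : Bool} {l : List Bool} (h : [x, x] <:+: a :: l) :
    (a = x ∧ l.head? = some x) ∨ [x, x] <:+: l := by
  rw [List.infix_cons_iff] at h
  rcases h with h | h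
  · rw [List.cons_prefix_cons] at h
    exact Or.inl ⟨h.1.symm, head_of_single_prefix h.2⟩
  · exact Or.inr h

theorem nf_cons_ne {x a : Bool} {l : List Bool} (hax : a ≠ x) (h : ¬ [x, x] <:+: l) :
    ¬ [x, x] <:+: a :: l := by
  intro hc
  rcases two_infix_cons hc with ⟨h1, _⟩ | h1
  · exact hax h1
  · exact h h1

theorem nf_cons_head {x a : Bool} {l : List Bool} (hh : l.head? ≠ some x)
    (h : ¬ [x, x] <:+: l) : ¬ [x, x] <:+: a :: l := by
  intro hc
  rcases two_infix_cons hc with ⟨_, h2⟩ | h1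
  · exact hh h2
  · exact h h1

def headIs (w : List Bool) (b : Bool) : Prop := w = [] ∨ w.head? = some b

theorem headIs_ne {w : List Bool} {b x : Bool} (h : headIs w b) (hbx : b ≠ x) :
    w.head? ≠ some x := by
  rcases h with rfl | h
  · simp
  · rw [h]
    intro hc
    injection hc with hc
    exact hbx hc

theorem cnt0_flag_false {w : List Bool} (h : ¬ [true, true] <:+: w) (hh : headIs w false) :
    (delRunAux true false w).count true = 0 := by
  rcases hh with rfl | hh
  · rfl
  · cases w with
    | nil => rfl
    | cons b w' =>
      have hb : b = false := by simpa using hh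
      subst hb
      rw [aux_ne (by simp) false w', List.count_cons]
      simp [cnt_aux_one w'.length true w' le_rfl (nf_tail h)]

theorem cnt0_flag_false' {w : List Bool} (h : ¬ [false, false] <:+: w) (hh : headIs w true) :
    (delRunAux false false w).count false = 0 := by
  rcases hh with rfl | hh
  · rfl
  · cases w with
    | nil => rfl
    | cons b w' =>
      have hb : b = true := by simpa using hh
      subst hb
      rw [aux_ne (by simp) false w', List.count_cons]
      simp [cnt_aux_one w'.length false w' le_rfl (nf_tail h)]

def SP : NOState → List Bool → Prop
  | NOState.E, w => AL w ∧ headIs w true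
  | NOState.U, w => AL w ∧ headIs w false
  | NOState.S, w => ¬ [false, false] <:+: w ∧ (delRunAux true true w).count true ≤ 1 ∧ headIs w true
  | NOState.T, w => ¬ [false, false] <:+: w ∧ (delRunAux true false w).count true ≤ 1
  | NOState.C, w => ¬ [true, true] <:+: w ∧ (delRunAux false true w).count false ≤ 1 ∧ headIs w false
  | NOState.D, w => ¬ [true, true] <:+: w ∧ (delRunAux false false w).count false ≤ 1
  | NOState.B, w => ∃ u v, w = u ++ v ∧ AL u ∧ headIs u false ∧ Gt v
  | NOState.R, w => ∃ u v, w = u ++ v ∧ AL u ∧ headIs u true ∧ Gt v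

theorem sp_main : ∀ (w : List Bool) (q : NOState), (autTraj noStep q w).isSome → SP q w := by
  intro w
  induction w with
  | nil =>
    intro q _
    cases q
    case B => exact ⟨[], [], rfl, ⟨nf_nil, nf_nil⟩, Or.inl rfl, Or.inl ⟨nf_nil, by simp [delRunAux]⟩⟩
    case R => exact ⟨[], [], rfl, ⟨nf_nil, nf_nil⟩, Or.inl rfl, Or.inl ⟨nf_nil, by simp [delRunAux]⟩⟩
    case S => exact ⟨nf_nil, by simp [delRunAux], Or.inl rfl⟩
    case T => exact ⟨nf_nil, by simp [delRunAux]⟩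
    case C => exact ⟨nf_nil, by simp [delRunAux], Or.inl rfl⟩
    case D => exact ⟨nf_nil, by simp [delRunAux]⟩
    case U => exact ⟨⟨nf_nil, nf_nil⟩, Or.inl rfl⟩
    case E => exact ⟨⟨nf_nil, nf_nil⟩, Or.inl rfl⟩
  | cons a w ih =>
    intro q h
    cases q with
    | B =>
      cases a with
      | false =>
        replace h : (autTraj noStep NOState.R w).isSome := by simpa [autTraj, noStep] using h
        obtain ⟨u, v, rfl, hAL, hHd, hGt⟩ := ih NOState.R h
        refine ⟨false :: u, v, rfl, ⟨?_, ?_⟩, Or.inr rfl, hGt⟩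
        · exact nf_cons_head (headIs_ne hHd (by simp)) hAL.1
        · exact nf_cons_ne (by simp) hAL.2
      | true =>
        replace h : (autTraj noStep NOState.C w).isSome := by simpa [autTraj, noStep] using h
        obtain ⟨h11, hcnt, hHd⟩ := ih NOState.C h
        refine ⟨[], true :: w, rfl, ⟨nf_nil, nf_nil⟩, Or.inl rfl, Or.inr ⟨?_, ?_⟩⟩
        · exact nf_cons_head (headIs_ne hHd (by simp)) h11
        · rw [aux_ne (by simp) true w, List.count_cons]; simpa using hcnt
    | R =>
      cases a with
      | true =>
        replace h : (autTraj noStep NOState.B w).isSome := by simpa [autTraj, noStep] using h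
        obtain ⟨u, v, rfl, hAL, hHd, hGt⟩ := ih NOState.B h
        refine ⟨true :: u, v, rfl, ⟨?_, ?_⟩, Or.inr rfl, hGt⟩
        · exact nf_cons_ne (by simp) hAL.1
        · exact nf_cons_head (headIs_ne hHd (by simp)) hAL.2
      | false =>
        replace h : (autTraj noStep NOState.S w).isSome := by simpa [autTraj, noStep] using h
        obtain ⟨h00, hcnt, hHd⟩ := ih NOState.S h
        refine ⟨[], false :: w, rfl, ⟨nf_nil, nf_nil⟩, Or.inl rfl, Or.inl ⟨?_, ?_⟩⟩
        · exact nf_cons_head (headIs_ne hHd (by simp)) h00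
        · rw [aux_ne (by simp) true w, List.count_cons]; simpa using hcnt
    | S =>
      cases a with
      | true =>
        replace h : (autTraj noStep NOState.T w).isSome := by simpa [autTraj, noStep] using h
        obtain ⟨h00, hcnt⟩ := ih NOState.T h
        refine ⟨nf_cons_ne (by simp) h00, ?_, Or.inr rfl⟩
        rw [aux_del]; exact hcnt
      | false => simp [autTraj, noStep] at h
    | T =>
      cases a with
      | false =>
        replace h : (autTraj noStep NOState.S w).isSome := by simpa [autTraj, noStep] using h
        obtain ⟨h00, hcnt, hHd⟩ := ih NOState.S h
        refine ⟨nf_cons_head (headIs_ne hHd (by simp)) h00, ?_⟩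
        rw [aux_ne (by simp) false w, List.count_cons]; simpa using hcnt
      | true =>
        replace h : (autTraj noStep NOState.U w).isSome := by simpa [autTraj, noStep] using h
        obtain ⟨hAL, hHd⟩ := ih NOState.U h
        refine ⟨nf_cons_ne (by simp) hAL.1, ?_⟩
        rw [aux_keep, List.count_cons]
        simp [cnt0_flag_false hAL.2 hHd]
    | U =>
      cases a with
      | false =>
        replace h : (autTraj noStep NOState.E w).isSome := by simpa [autTraj, noStep] using h
        obtain ⟨hAL, hHd⟩ := ih NOState.E h
        exact ⟨⟨nf_cons_head (headIs_ne hHd (by simp)) hAL.1, nf_cons_ne (by simp) hAL.2⟩, Or.inr rfl⟩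
      | true => simp [autTraj, noStep] at h
    | E =>
      cases a with
      | true =>
        replace h : (autTraj noStep NOState.U w).isSome := by simpa [autTraj, noStep] using h
        obtain ⟨hAL, hHd⟩ := ih NOState.U h
        exact ⟨⟨nf_cons_ne (by simp) hAL.1, nf_cons_head (headIs_ne hHd (by simp)) hAL.2⟩, Or.inr rfl⟩
      | false => simp [autTraj, noStep] at h
    | C =>
      cases a with
      | false =>
        replace h : (autTraj noStep NOState.D w).isSome := by simpa [autTraj, noStep] using h
        obtain ⟨h11, hcnt⟩ := ih NOState.D h
        refine ⟨nf_cons_ne (by simp) h11, ?_, Or.inr rfl⟩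
        rw [aux_del]; exact hcnt
      | true => simp [autTraj, noStep] at h
    | D =>
      cases a with
      | true =>
        replace h : (autTraj noStep NOState.C w).isSome := by simpa [autTraj, noStep] using h
        obtain ⟨h11, hcnt, hHd⟩ := ih NOState.C h
        refine ⟨nf_cons_head (headIs_ne hHd (by simp)) h11, ?_⟩
        rw [aux_ne (by simp) false w, List.count_cons]; simpa using hcnt
      | false =>
        replace h : (autTraj noStep NOState.E w).isSome := by simpa [autTraj, noStep] using h
        obtain ⟨hAL, hHd⟩ := ih NOState.E h
        refine ⟨nf_cons_ne (by simp) hAL.2, ?_⟩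
        rw [aux_keep, List.count_cons]
        simp [cnt0_flag_false' hAL.1 hHd]

theorem base_split {w : List Bool} (h : NonOscDiagonal w) :
    ∃ u v : List Bool, w = u ++ v ∧ BalancedWord 1 u ∧ BalancedWord 1 v := by
  obtain ⟨q, hq⟩ := h
  have sp := sp_main w q hq
  cases q with
  | B => obtain ⟨u, v, rfl, hAL, _, hGt⟩ := sp; exact ⟨u, v, rfl, al_bal hAL, gt_bal hGt⟩
  | R => obtain ⟨u, v, rfl, hAL, _, hGt⟩ := sp; exact ⟨u, v, rfl, al_bal hAL, gt_bal hGt⟩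
  | S => exact ⟨w, [], by simp, gt_bal (Or.inl ⟨sp.1, sp.2.1⟩), bal_nil⟩
  | T => exact ⟨w, [], by simp, gt_bal (Or.inl ⟨sp.1, le_trans (cnt_aux_mono true w) sp.2⟩), bal_nil⟩
  | C => exact ⟨w, [], by simp, gt_bal (Or.inr ⟨sp.1, sp.2.1⟩), bal_nil⟩
  | D => exact ⟨w, [], by simp, gt_bal (Or.inr ⟨sp.1, le_trans (cnt_aux_mono false w) sp.2⟩), bal_nil⟩
  | U => exact ⟨w, [], by simp, al_bal sp.1, bal_nil⟩
  | E => exact ⟨w, [], by simp, al_bal sp.1, bal_nil⟩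

theorem step_split {a b : List Bool} (hD : Desub a b)
    (IH : ∃ u v : List Bool, b = u ++ v ∧ BalancedWord 1 u ∧ BalancedWord 1 v) :
    ∃ u v : List Bool, a = u ++ v ∧ BalancedWord 1 u ∧ BalancedWord 1 v := by
  obtain ⟨_, hcase⟩ := hD
  obtain ⟨u', v', heq, b1, b2⟩ := IH
  rcases hcase with ⟨h11, hz⟩ | ⟨h00, hz⟩
  · have heq' : delRunAux false true a = u' ++ v' := by
      rw [show delRunAux false true a = delRun false a from rfl, ← hz]; exact heq
    obtain ⟨w1, w2, d2, rfl, e1, e2⟩ := aux_split false a true u' v' heq'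
    refine ⟨w1, w2, rfl, ?_, ?_⟩
    · exact bal_pre0 (fun hc => h11 (hc.trans (List.prefix_append w1 w2).isInfix))
        (by rw [e1]; exact b1)
    · exact bal_pre0 (fun hc => h11 (hc.trans (List.suffix_append w1 w2).isInfix))
        (by rw [e2]; exact b2)
  · have heq' : delRunAux true true a = u' ++ v' := by
      rw [show delRunAux true true a = delRun true a from rfl, ← hz]; exact heq
    obtain ⟨w1, w2, d2, rfl, e1, e2⟩ := aux_split true a true u' v' heq'
    refine ⟨w1, w2, rfl, ?_, ?_⟩
    · exact bal_pre1 (fun hc => h00 (hc.trans (List.prefix_append w1 w2).isInfix))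
        (by rw [e1]; exact b1)
    · exact bal_pre1 (fun hc => h00 (hc.trans (List.suffix_append w1 w2).isInfix))
        (by rw [e2]; exact b2)

end myTA

/-- every tangent analytic word is a concatenation of two 1-balanced words. -/
theorem tangent_analytic_concat_balanced (w : List Bool) (h : TangentAnalytic w) :
    ∃ u v : List Bool, w = u ++ v ∧ BalancedWord 1 u ∧ BalancedWord 1 v := by
  obtain ⟨z, hrt, hNO⟩ := h
  induction hrt using Relation.ReflTransGen.head_induction_on with
  | refl => exact myTA.base_split hNO
  | head hab _ ih => exact myTA.step_split hab ih
end

section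
/- The complexity of the language T^∞ of tangent words grows exponentially: there exist a constant c > 1 and an integer N such that for all n ≥ N, p_n(T^∞) ≥ c^n, where p_n(T^∞) is the number of tangent words of length n. -/
/-- encode: each bit x becomes block [x, !x] -/
def enc : List Bool → List Bool
  | [] => []
  | x :: b => x :: (!x) :: enc b

lemma enc_length (b : List Bool) : (enc b).length = 2 * b.length := by
  induction b with
  | nil => rfl
  | cons x b ih => simp [enc, ih]; ring

lemma enc_inj : Function.Injective enc := by
  intro b b' h
  induction b generalizing b' with
  | nil => cases b' with
    | nil => rfl
    | cons y b' => simp [enc] at h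
  | cons x b ih =>
    cases b' with
    | nil => simp [enc] at h
    | cons y b' =>
      simp only [enc] at h
      injection h with h1 h2
      injection h2 with h2 h3
      rw [h1, ih h3]

lemma enc_traj (b t : List Bool) (ht : (autTraj diagStep .R t).isSome) :
    (autTraj diagStep .R (enc b ++ t)).isSome := by
  induction b with
  | nil => simpa [enc]
  | cons x b ih =>
    cases x <;>
      simp [enc, autTraj, diagStep, Option.isSome] at ih ⊢ <;>
      rcases h : autTraj diagStep DiagState.R (enc b ++ t) with _ | l <;>
      simp [h] at ih ⊢

lemma enc_diagonal (b t : List Bool) (ht : (autTraj diagStep .R t).isSome) :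
    Diagonal (enc b ++ t) := ⟨.R, enc_traj b t ht⟩

lemma pcount_lower (n : ℕ) : 2 ^ (n / 2) ≤ pcount Tinf n := by
  classical
  set k := n / 2 with hk
  set t : List Bool := if n % 2 = 1 then [false] else [] with htdef
  have ht : (autTraj diagStep .R t).isSome := by
    rw [htdef]; split <;> simp [autTraj, diagStep]
  have hg : Function.Injective (fun b : Fin k → Bool => enc (List.ofFn b) ++ t) := by
    intro b b' h
    simp only at h
    exact List.ofFn_injective (enc_inj (List.append_cancel_right h))
  set F : Finset (List Bool) :=
    Finset.univ.image (fun b : Fin k → Bool => enc (List.ofFn b) ++ t) with hF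
  have hFcard : F.card = 2 ^ k := by
    rw [hF, Finset.card_image_of_injective _ hg]
    simp
  have hsub : ↑F ⊆ {w | w ∈ Tinf ∧ w.length = n} := by
    intro w hw
    simp only [hF, Finset.coe_image, Set.mem_image, Finset.mem_coe] at hw
    obtain ⟨b, _, rfl⟩ := hw
    refine ⟨⟨_, Relation.ReflTransGen.refl, enc_diagonal _ _ ht⟩, ?_⟩
    have htlen : t.length = n % 2 := by
      rw [htdef]; split <;> simp <;> omega
    simp only [List.length_append, enc_length, List.length_ofFn, htlen, hk]
    omega
  have hfin : {w | w ∈ Tinf ∧ w.length = n}.Finite :=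
    (List.finite_length_eq Bool n).subset (fun w hw => hw.2)
  calc 2 ^ k = F.card := hFcard.symm
    _ = (↑F : Set (List Bool)).ncard := (Set.ncard_coe_finset F).symm
    _ ≤ pcount Tinf n := Set.ncard_le_ncard hsub hfin

/-- the complexity of `T^∞` grows exponentially:
`p_n(T^∞) ≥ c^n` for all large `n`, for some constant `c > 1`. -/
theorem tangent_complexity_exponential :
    ∃ c : ℝ, 1 < c ∧ ∃ N : ℕ, ∀ n : ℕ, N ≤ n → c ^ n ≤ (pcount Tinf n : ℝ) := by
  refine ⟨(2:ℝ) ^ ((1:ℝ)/4), ?_, 2, fun n hn => ?_⟩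
  · rw [Real.one_lt_rpow_iff_of_pos (by norm_num)]
    norm_num
  · have h1 : ((2:ℝ) ^ ((1:ℝ)/4)) ^ n = (2:ℝ) ^ ((1/4 : ℝ) * n) := by
      rw [← Real.rpow_natCast ((2:ℝ) ^ ((1:ℝ)/4)) n, ← Real.rpow_mul (by norm_num)]
    have hnat : n ≤ 4 * (n/2) := by omega
    have h2 : (1/4 : ℝ) * n ≤ ((n/2 : ℕ) : ℝ) := by
      have := (Nat.cast_le (α := ℝ)).mpr hnat
      push_cast at this ⊢
      linarith
    have h3 : (2:ℝ) ^ ((1/4:ℝ) * n) ≤ (2:ℝ) ^ (((n/2:ℕ)):ℝ) :=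
      Real.rpow_le_rpow_of_exponent_le (by norm_num) h2
    have h4 : (2:ℝ) ^ (((n/2:ℕ)):ℝ) = ((2 ^ (n/2 : ℕ) : ℕ) : ℝ) := by
      rw [Real.rpow_natCast]; push_cast; ring
    have h5 : ((2 ^ (n/2 : ℕ) : ℕ) : ℝ) ≤ (pcount Tinf n : ℝ) :=
      Nat.cast_le.mpr (pcount_lower n)
    calc ((2:ℝ) ^ ((1:ℝ)/4)) ^ n = (2:ℝ) ^ ((1/4 : ℝ) * n) := h1
      _ ≤ (2:ℝ) ^ (((n/2:ℕ)):ℝ) := h3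
      _ = ((2 ^ (n/2 : ℕ) : ℕ) : ℝ) := h4
      _ ≤ (pcount Tinf n : ℝ) := h5
end
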